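/- Let s ≥ 3 and let H be an s-uniform hypergraph satisfying: for every set F of hyperedges with |F| < 2^{s+1}, |⋃_{e∈F} e| ≥ (s−1)|F|. Let X ⊆ V(H) with |X| = s+1, and let H_X be the restriction of H to X (vertex set X, hyperedges {e ∩ X : e ∈ E(H), |e ∩ X| ≥ 2}). Then for every set F of hyperedges of H_X, |⋃_{f∈F} f| ≥ Σ_{f∈F}(|f| − 1). -/
import Mathlib


theorem stmt4 {V : Type*} [Fintype V] [DecidableEq V] (s : ℕ) (hs : 3 ≤ s)
    (E : Finset (Finset V))
    (huniform : ∀ e ∈ E, e.card = s)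
    (hsparse : ∀ F ⊆ E, F.card < 2 ^ (s + 1) → (s - 1) * F.card ≤ (F.biUnion id).card)
    (X : Finset V) (hX : X.card = s + 1) :
    ∀ F ⊆ (E.filter (fun e => 2 ≤ (e ∩ X).card)).image (fun e => e ∩ X),
      ∑ f ∈ F, (f.card - 1) ≤ (F.biUnion id).card := by
  intro F hF
  classical
  -- choice function
  have hchoose : ∀ f ∈ F, ∃ e, e ∈ E ∧ e ∩ X = f := by
    intro f hf
    obtain ⟨e, he, hef⟩ := Finset.mem_image.1 (hF hf)
    exact ⟨e, (Finset.mem_filter.1 he).1, hef⟩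
  set g : Finset V → Finset V := fun f =>
    if h : ∃ e, e ∈ E ∧ e ∩ X = f then h.choose else ∅ with hg
  have hgE : ∀ f ∈ F, g f ∈ E := by
    intro f hf
    have h := hchoose f hf
    simp only [hg, dif_pos h]
    exact h.choose_spec.1
  have hgX : ∀ f ∈ F, g f ∩ X = f := by
    intro f hf
    have h := hchoose f hf
    simp only [hg, dif_pos h]
    exact h.choose_spec.2
  have hfX : ∀ f ∈ F, f ⊆ X := by
    intro f hf
    rw [← hgX f hf]; exact Finset.inter_subset_right
  have hf2 : ∀ f ∈ F, 2 ≤ f.card := by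
    intro f hf
    obtain ⟨e, he, hef⟩ := Finset.mem_image.1 (hF hf)
    rw [← hef]; exact (Finset.mem_filter.1 he).2
  have hfs : ∀ f ∈ F, f.card ≤ s := by
    intro f hf
    calc f.card = (g f ∩ X).card := by rw [hgX f hf]
      _ ≤ (g f).card := Finset.card_le_card Finset.inter_subset_left
      _ = s := huniform _ (hgE f hf)
  -- F is small
  have hFsmall : F.card < 2 ^ (s + 1) := by
    have hsub : F ⊆ X.powerset.erase ∅ := by
      intro f hf
      refine Finset.mem_erase.2 ⟨?_, Finset.mem_powerset.2 (hfX f hf)⟩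
      intro h
      have := hf2 f hf
      simp [h] at this
    have := Finset.card_le_card hsub
    have h1 : (X.powerset.erase ∅).card = 2 ^ (s + 1) - 1 := by
      rw [Finset.card_erase_of_mem (Finset.mem_powerset.2 (Finset.empty_subset X)),
        Finset.card_powerset, hX]
    have hpow : 0 < 2 ^ (s + 1) := Nat.two_pow_pos _
    omega
  -- apply hsparse to image of g
  have hinj : Set.InjOn g F := by
    intro a ha b hb hab
    rw [← hgX a ha, ← hgX b hb, hab]
  have hcardim : (F.image g).card = F.card := Finset.card_image_of_injOn hinj
  have hsubE : F.image g ⊆ E := by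
    intro e he
    obtain ⟨f, hf, rfl⟩ := Finset.mem_image.1 he
    exact hgE f hf
  have hkey : (s - 1) * F.card ≤ ((F.image g).biUnion id).card := by
    rw [← hcardim]
    exact hsparse _ hsubE (by rw [hcardim]; exact hFsmall)
  -- union bound
  have hbi : (F.image g).biUnion id = F.biUnion g := Finset.image_biUnion
  have hsplit : F.biUnion g ⊆ (F.biUnion id) ∪ (F.biUnion (fun f => g f \ X)) := by
    intro v hv
    obtain ⟨f, hf, hvf⟩ := Finset.mem_biUnion.1 hv
    by_cases hvX : v ∈ X
    · exact Finset.mem_union_left _ (Finset.mem_biUnion.2 ⟨f, hf, by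
        rw [id]
        rw [← hgX f hf]; exact Finset.mem_inter.2 ⟨hvf, hvX⟩⟩)
    · exact Finset.mem_union_right _ (Finset.mem_biUnion.2 ⟨f, hf,
        Finset.mem_sdiff.2 ⟨hvf, hvX⟩⟩)
  have hunion : ((F.image g).biUnion id).card ≤
      (F.biUnion id).card + ∑ f ∈ F, (s - f.card) := by
    rw [hbi]
    calc (F.biUnion g).card ≤ ((F.biUnion id) ∪ (F.biUnion (fun f => g f \ X))).card :=
          Finset.card_le_card hsplit
      _ ≤ (F.biUnion id).card + (F.biUnion (fun f => g f \ X)).card :=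
          Finset.card_union_le _ _
      _ ≤ (F.biUnion id).card + ∑ f ∈ F, (g f \ X).card := by
          exact Nat.add_le_add_left (Finset.card_biUnion_le) _
      _ = (F.biUnion id).card + ∑ f ∈ F, (s - f.card) := by
          congr 1
          apply Finset.sum_congr rfl
          intro f hf
          have h1 : (g f ∩ X).card = f.card := by rw [hgX f hf]
          have h2 : (g f).card = s := huniform _ (hgE f hf)
          have h3 := Finset.card_sdiff_add_card_inter (g f) X
          omega
  -- arithmetic
  have hS1 : ∑ f ∈ F, (f.card - 1) + F.card = ∑ f ∈ F, f.card := by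
    rw [Finset.card_eq_sum_ones, ← Finset.sum_add_distrib]
    exact Finset.sum_congr rfl (fun f hf => Nat.sub_add_cancel (by have := hf2 f hf; omega))
  have hS2 : ∑ f ∈ F, (s - f.card) + ∑ f ∈ F, f.card = s * F.card := by
    rw [← Finset.sum_add_distrib,
      Finset.sum_congr rfl (fun f hf => Nat.sub_add_cancel (hfs f hf)),
      Finset.sum_const, smul_eq_mul, mul_comm]
  have hm : s * F.card = (s - 1) * F.card + F.card := by
    have h1 : s - 1 + 1 = s := by omega
    calc s * F.card = (s - 1 + 1) * F.card := by rw [h1]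
      _ = (s - 1) * F.card + F.card := by ring
  omega
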